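/- Let θ : ℝ → ℝ satisfy θ'(s) = −θ(s)·sin θ(s) for all s with θ(0) = θ₀ ∈ (0, π), and let y, z : ℝ → ℝ satisfy y(0) = z(0) = 0, z'(s) = sin θ(s), y'(s) = e^{z(s)}·cos θ(s). Then as s → +∞: z(s)/log s → 1, the function y(s) is eventually positive, and z(s) − (1/2)·log y(s) converges to a finite limit (i.e., the profile curve is asymptotic to a half-logarithmic curve z = (1/2) log(y − y₀) + z₀). -/

import Mathlib

open Real Filter Topology

lemma lemGen (f f' : ℝ → ℝ) (hf : ∀ s, HasDerivAt f (f' s) s) (n : ℕ) (c : ℝ)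
    (h : Tendsto (fun s => f' s / s ^ n) atTop (𝓝 c)) :
    Tendsto (fun s => f s / s ^ (n + 1)) atTop (𝓝 (c / (n + 1))) := by
  rw [Metric.tendsto_atTop]
  intro ε hε
  have hε2 : 0 < ε / 2 := by positivity
  -- get s₀ ≥ 1 with |f' t / t^n - c| < ε/2 for t ≥ s₀
  obtain ⟨s₁, hs₁⟩ := (Metric.tendsto_atTop.1 h) (ε / 2) hε2
  set s₀ : ℝ := max s₁ 1 with hs₀def
  have hs₀1 : (1 : ℝ) ≤ s₀ := le_max_right _ _
  have hs₀0 : (0 : ℝ) < s₀ := lt_of_lt_of_le one_pos hs₀1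
  -- auxiliary function
  set F : ℝ → ℝ := fun t => f t - c * t ^ (n + 1) / (n + 1) with hFdef
  have hF : ∀ t, HasDerivAt F (f' t - c * t ^ n) t := by
    intro t
    have h1 : HasDerivAt (fun t : ℝ => c * t ^ (n + 1) / (n + 1 : ℝ))
        (c * (((n:ℝ) + 1) * t ^ n) / ((n:ℝ) + 1)) t := by
      have := ((hasDerivAt_pow (n+1) t).const_mul c).div_const ((n:ℝ)+1)
      simpa using this
    have h2 : c * (((n:ℝ) + 1) * t ^ n) / ((n:ℝ) + 1) = c * t ^ n := by
      have : ((n:ℝ) + 1) ≠ 0 := by positivity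
      field_simp
    rw [h2] at h1
    exact (hf t).sub h1
  have key : ∀ s ≥ s₀, |F s - F s₀| ≤ ε / 2 * s ^ (n + 1) := by
    intro s hs
    have hbound : ∀ t ∈ Set.Icc s₀ s, ‖f' t - c * t ^ n‖ ≤ ε / 2 * s ^ n := by
      intro t ht
      have ht0 : (0 : ℝ) < t := lt_of_lt_of_le hs₀0 ht.1
      have htn : (0 : ℝ) < t ^ n := pow_pos ht0 n
      have := hs₁ t (le_trans (le_max_left _ _) ht.1)
      rw [Real.dist_eq] at this
      have h3 : |f' t - c * t ^ n| ≤ ε / 2 * t ^ n := by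
        have : |f' t / t ^ n - c| * t ^ n ≤ ε / 2 * t ^ n :=
          mul_le_mul_of_nonneg_right this.le htn.le
        have heq : (f' t / t ^ n - c) * t ^ n = f' t - c * t ^ n := by
          field_simp
        calc |f' t - c * t ^ n| = |f' t / t ^ n - c| * t ^ n := by
              rw [← heq, abs_mul, abs_of_pos htn]
          _ ≤ ε / 2 * t ^ n := this
      refine h3.trans ?_
      have : t ^ n ≤ s ^ n := pow_le_pow_left₀ ht0.le ht.2 n
      nlinarith
    have := Convex.norm_image_sub_le_of_norm_hasDerivWithin_le
      (f' := fun t => f' t - c * t ^ n)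
      (fun t ht => (hF t).hasDerivWithinAt) hbound (convex_Icc s₀ s)
      (Set.left_mem_Icc.2 hs) (Set.right_mem_Icc.2 hs)
    rw [Real.norm_eq_abs, Real.norm_eq_abs] at this
    have hss : |s - s₀| ≤ s := by
      rw [abs_of_nonneg (by linarith)]; linarith
    calc |F s - F s₀| ≤ ε / 2 * s ^ n * |s - s₀| := this
      _ ≤ ε / 2 * s ^ n * s := by
          have hsp : (0:ℝ) < s := lt_of_lt_of_le hs₀0 hs
          have : (0:ℝ) ≤ ε / 2 * s ^ n := by positivity
          exact mul_le_mul_of_nonneg_left hss this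
      _ = ε / 2 * s ^ (n + 1) := by ring
  -- now conclude
  have hfin : ∀ᶠ s in atTop, |F s₀| / s < ε / 2 := by
    have h1 : Tendsto (fun s : ℝ => |F s₀| / s) atTop (𝓝 0) :=
      tendsto_const_nhds.div_atTop tendsto_id
    have := (h1.eventually (eventually_lt_nhds hε2))
    simpa using this
  rw [eventually_atTop] at hfin
  obtain ⟨s₂, hs₂⟩ := hfin
  refine ⟨max s₀ s₂, fun s hs => ?_⟩
  have hss₀ : s₀ ≤ s := le_trans (le_max_left _ _) hs
  have hsp : (0:ℝ) < s := lt_of_lt_of_le hs₀0 hss₀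
  have hs1 : (1:ℝ) ≤ s := le_trans hs₀1 hss₀
  have hspow : (0:ℝ) < s ^ (n+1) := pow_pos hsp _
  have hkey := key s hss₀
  have h2 := hs₂ s (le_trans (le_max_right _ _) hs)
  rw [Real.dist_eq]
  have heq : f s / s ^ (n+1) - c / (n+1) = F s / s ^ (n+1) := by
    rw [hFdef]
    have : ((n:ℝ) + 1) ≠ 0 := by positivity
    field_simp
  rw [heq]
  have hspow_ge : s ≤ s ^ (n+1) := by
    calc s = s ^ 1 := (pow_one s).symm
      _ ≤ s ^ (n+1) := pow_le_pow_right₀ hs1 (by omega)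
  calc |F s / s ^ (n+1)| = |F s| / s ^ (n+1) := by
        rw [abs_div, abs_of_pos hspow]
    _ ≤ (|F s₀| + |F s - F s₀|) / s ^ (n+1) := by
        gcongr
        calc |F s| = |F s₀ + (F s - F s₀)| := by ring_nf
          _ ≤ |F s₀| + |F s - F s₀| := abs_add_le _ _
    _ ≤ |F s₀| / s ^ (n+1) + ε / 2 := by
        rw [add_div]
        have hA : |F s - F s₀| / s ^ (n+1) ≤ ε / 2 := by
          rw [div_le_iff₀ hspow]; linarith
        linarith
    _ < ε / 2 + ε / 2 := by
        have : |F s₀| / s ^ (n+1) ≤ |F s₀| / s := by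
          gcongr
        linarith
    _ = ε := by ring

theorem stmt14 (θ₀ : ℝ) (hθ₀ : θ₀ ∈ Set.Ioo 0 π) (θ y z : ℝ → ℝ)
    (hθ0 : θ 0 = θ₀)
    (hθ : ∀ s : ℝ, HasDerivAt θ (-(θ s) * Real.sin (θ s)) s)
    (hy0 : y 0 = 0) (hz0 : z 0 = 0)
    (hz : ∀ s : ℝ, HasDerivAt z (Real.sin (θ s)) s)
    (hy : ∀ s : ℝ, HasDerivAt y (Real.exp (z s) * Real.cos (θ s)) s) :
    Tendsto (fun s => z s / Real.log s) atTop (𝓝 1) ∧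
    (∀ᶠ s in atTop, 0 < y s) ∧
    (∃ L : ℝ, Tendsto (fun s => z s - (1 / 2) * Real.log (y s)) atTop (𝓝 L)) := by
  obtain ⟨hθ₀pos, hθ₀lt⟩ := hθ₀
  have hθc : Continuous θ := by
    refine continuous_iff_continuousAt.2 fun s => (hθ s).continuousAt
  -- conserved quantity : θ s * exp (z s) = θ₀
  have hcons : ∀ s, θ s * Real.exp (z s) = θ₀ := by
    have hd : ∀ s, HasDerivAt (fun s => θ s * Real.exp (z s)) 0 s := by
      intro s
      have h1 := (hθ s).mul ((hz s).exp)
      refine h1.congr_deriv ?_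
      ring
    have hconst := is_const_of_deriv_eq_zero
      (fun s => (hd s).differentiableAt) (fun s => (hd s).deriv)
    intro s
    have := hconst s 0
    simpa [hθ0, hz0] using this
  have hθpos : ∀ s, 0 < θ s := by
    intro s
    have h := hcons s
    nlinarith [Real.exp_pos (z s), Real.exp_pos (z s)]
  have hθne : ∀ s, θ s ≠ 0 := fun s => (hθpos s).ne'
  have hexpz : ∀ s, Real.exp (z s) = θ₀ / θ s := by
    intro s
    rw [eq_div_iff (hθne s), mul_comm]
    exact hcons s
  -- barrier at π via cos (θ/2)
  have hθltπ : ∀ s, θ s < π := by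
    set w : ℝ → ℝ := fun t => θ t * Real.sin (θ t / 2) ^ 2 with hwdef
    have hwc : Continuous w :=
      hθc.mul ((Real.continuous_sin.comp (hθc.div_const 2)).pow 2)
    set A : ℝ → ℝ := fun s => ∫ t in (0:ℝ)..s, w t with hAdef
    have hA : ∀ s, HasDerivAt A (w s) s := fun s =>
      intervalIntegral.integral_hasDerivAt_right (hwc.intervalIntegrable _ _)
        (hwc.stronglyMeasurableAtFilter _ _) hwc.continuousAt
    have hhalf : ∀ s, Real.cos (θ s / 2) * Real.exp (-A s) = Real.cos (θ₀ / 2) := by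
      have hd : ∀ s, HasDerivAt (fun s => Real.cos (θ s / 2) * Real.exp (-A s)) 0 s := by
        intro s
        have h1 : HasDerivAt (fun s => Real.cos (θ s / 2))
            (-Real.sin (θ s / 2) * ((-(θ s) * Real.sin (θ s)) / 2)) s := ((hθ s).div_const 2).cos
        have h2 : HasDerivAt (fun s => Real.exp (-A s)) (Real.exp (-A s) * -w s) s :=
          ((hA s).neg).exp
        have h3 := h1.mul h2
        refine h3.congr_deriv ?_
        have hsin : Real.sin (θ s) = 2 * Real.sin (θ s / 2) * Real.cos (θ s / 2) := by
          rw [← Real.sin_two_mul]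
          ring_nf
        rw [hwdef, hsin]
        ring
      have hconst := is_const_of_deriv_eq_zero (fun s => (hd s).differentiableAt)
        (fun s => (hd s).deriv)
      intro s
      have h4 := hconst s 0
      have hA0 : A 0 = 0 := intervalIntegral.integral_same
      rw [hA0] at h4
      simpa [hθ0] using h4
    have hcoshalf : ∀ s, 0 < Real.cos (θ s / 2) := by
      intro s
      have h5 := hhalf s
      have h6 : 0 < Real.cos (θ₀ / 2) := Real.cos_pos_of_mem_Ioo
        ⟨by linarith [Real.pi_pos], by linarith⟩
      nlinarith [Real.exp_pos (-A s)]
    intro s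
    by_contra hge
    push_neg at hge
    have hmem : π ∈ Set.uIcc (θ 0) (θ s) := by
      rw [Set.mem_uIcc]
      left
      exact ⟨by rw [hθ0]; linarith, hge⟩
    obtain ⟨u, _, hu⟩ := intermediate_value_uIcc hθc.continuousOn hmem
    have h7 := hcoshalf u
    rw [hu] at h7
    simp at h7
  -- θ is antitone
  have hθanti : Antitone θ := by
    apply antitone_of_deriv_nonpos (fun s => (hθ s).differentiableAt)
    intro s
    rw [(hθ s).deriv]
    have h1 := Real.sin_pos_of_pos_of_lt_pi (hθpos s) (hθltπ s)
    nlinarith [hθpos s]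
  have hbdd : BddBelow (Set.range θ) := by
    refine ⟨0, fun x hx => ?_⟩
    obtain ⟨s, rfl⟩ := hx
    exact (hθpos s).le
  -- θ tends to 0
  have hθ0lim : Tendsto θ atTop (𝓝 0) := by
    set ℓ := ⨅ s, θ s with hℓdef
    have hlim : Tendsto θ atTop (𝓝 ℓ) := tendsto_atTop_ciInf hθanti hbdd
    have hℓ0 : 0 ≤ ℓ := le_ciInf fun s => (hθpos s).le
    rcases eq_or_lt_of_le hℓ0 with h | h
    · rwa [← h] at hlim
    exfalso
    have hℓle : ℓ ≤ θ₀ := by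
      rw [← hθ0]
      exact ciInf_le hbdd 0
    obtain ⟨x₀, hx₀mem, hx₀min⟩ := isCompact_Icc.exists_isMinOn (Set.nonempty_Icc.2 hℓle)
      Real.continuous_sin.continuousOn
    set m := Real.sin x₀ with hmdef
    have hθ0π : θ 0 < π := hθltπ 0
    have hm : 0 < m := Real.sin_pos_of_pos_of_lt_pi (lt_of_lt_of_le h hx₀mem.1)
      (lt_of_le_of_lt hx₀mem.2 (by rw [← hθ0]; exact hθ0π))
    have hdiff : Differentiable ℝ (fun t => θ t + ℓ * m * t) := by
      intro t
      exact ((hθ t).add (((hasDerivAt_id t).const_mul (ℓ * m)))).differentiableAt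
    have hu : AntitoneOn (fun t => θ t + ℓ * m * t) (Set.Ici 0) := by
      apply antitoneOn_of_deriv_nonpos (convex_Ici 0) hdiff.continuous.continuousOn
        hdiff.differentiableOn
      intro t ht
      have hdt : HasDerivAt (fun t => θ t + ℓ * m * t) (-(θ t) * Real.sin (θ t) + ℓ * m) t := by
        have := (hθ t).add (((hasDerivAt_id t).const_mul (ℓ * m)))
        exact this.congr_deriv (by ring)
      rw [hdt.deriv]
      have h1 : ℓ ≤ θ t := ciInf_le hbdd t
      have h2 : m ≤ Real.sin (θ t) := by
        refine isMinOn_iff.1 hx₀min (θ t) ⟨h1, ?_⟩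
        rw [interior_Ici] at ht
        rw [← hθ0]
        exact hθanti (le_of_lt ht)
      nlinarith
    set T := (θ₀ + 1) / (ℓ * m) with hTdef
    have hT : 0 ≤ T := by
      have : 0 < ℓ * m := mul_pos h hm
      positivity
    have h8 := hu (Set.self_mem_Ici) (Set.mem_Ici.2 hT) hT
    have h9 : ℓ * m * T = θ₀ + 1 := by
      rw [hTdef]
      field_simp
    have h10 := hθpos T
    simp only at h8
    rw [hθ0] at h8
    nlinarith
  -- g = 1/θ
  set g : ℝ → ℝ := fun s => (θ s)⁻¹ with hgdef
  have hgpos : ∀ s, 0 < g s := fun s => inv_pos.2 (hθpos s)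
  have hg : ∀ s, HasDerivAt g (Real.sin (θ s) / θ s) s := by
    intro s
    have h1 := (hθ s).inv (hθne s)
    refine h1.congr_deriv ?_
    field_simp [hθne s]
  have hsinc : Tendsto (fun s => Real.sin (θ s) / θ s) atTop (𝓝 1) := by
    have h1 : Tendsto (fun x : ℝ => Real.sin x / x) (𝓝[≠] 0) (𝓝 1) := by
      have h2 := hasDerivAt_iff_tendsto_slope.1 (Real.hasDerivAt_sin 0)
      rw [Real.cos_zero] at h2
      refine h2.congr fun x => ?_
      rw [slope_def_field]
      simp
    have h3 : Tendsto θ atTop (𝓝[≠] 0) := by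
      rw [tendsto_nhdsWithin_iff]
      exact ⟨hθ0lim, Eventually.of_forall fun s => hθne s⟩
    exact h1.comp h3
  have hg_s : Tendsto (fun s => g s / s) atTop (𝓝 1) := by
    have := lemGen g (fun s => Real.sin (θ s) / θ s) hg 0 1 (by simpa using hsinc)
    simpa using this
  -- y asymptotics
  have hyd : ∀ s, HasDerivAt y (θ₀ * (g s * Real.cos (θ s))) s := by
    intro s
    have h1 := hy s
    rw [hexpz s] at h1
    convert h1 using 1
    rw [hgdef]
    field_simp
  have hcos1 : Tendsto (fun s => Real.cos (θ s)) atTop (𝓝 1) := by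
    have := (Real.continuous_cos.tendsto 0).comp hθ0lim
    rw [Real.cos_zero] at this
    exact this
  have hy2 : Tendsto (fun s => y s / s ^ 2) atTop (𝓝 (θ₀ / 2)) := by
    have h1 : Tendsto (fun s => (θ₀ * (g s * Real.cos (θ s))) / s ^ 1) atTop (𝓝 θ₀) := by
      have h2 : Tendsto (fun s => θ₀ * ((g s / s) * Real.cos (θ s))) atTop (𝓝 (θ₀ * (1 * 1))) :=
        (hg_s.mul hcos1).const_mul θ₀
      simp only [mul_one] at h2
      refine h2.congr fun s => by rw [pow_one]; ring
    have := lemGen y _ hyd 1 θ₀ h1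
    norm_num at this
    convert this using 2
  -- eventually y positive
  have hy_pos : ∀ᶠ s in atTop, 0 < y s := by
    have h1 : ∀ᶠ s in atTop, 0 < y s / s ^ 2 :=
      hy2.eventually (eventually_gt_nhds (by positivity))
    filter_upwards [h1, eventually_gt_atTop (0:ℝ)] with s h2 h3
    have := mul_pos h2 (pow_pos h3 2)
    rwa [div_mul_cancel₀ _ (by positivity)] at this
  -- z in terms of g
  have hzlog : ∀ s, z s = Real.log θ₀ + Real.log (g s) := by
    intro s
    have := congrArg Real.log (hexpz s)
    rw [Real.log_exp, Real.log_div (ne_of_gt hθ₀pos) (hθne s)] at this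
    rw [this, hgdef]
    rw [Real.log_inv]
    ring
  -- part 1
  have hpart1 : Tendsto (fun s => z s / Real.log s) atTop (𝓝 1) := by
    have hlogg : Tendsto (fun s => Real.log (g s) - Real.log s) atTop (𝓝 0) := by
      have h1 : Tendsto (fun s => Real.log (g s / s)) atTop (𝓝 0) := by
        have := hg_s.log one_ne_zero
        simpa using this
      refine h1.congr' ?_
      filter_upwards [eventually_gt_atTop (0:ℝ)] with s hs
      rw [Real.log_div (ne_of_gt (hgpos s)) (ne_of_gt hs)]
    have htz : Tendsto (fun s => z s - Real.log s) atTop (𝓝 (Real.log θ₀)) := by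
      have := hlogg.const_add (Real.log θ₀)
      rw [add_zero] at this
      refine this.congr fun s => ?_
      rw [hzlog s]; ring
    have hdiv : Tendsto (fun s => (z s - Real.log s) / Real.log s) atTop (𝓝 0) :=
      htz.div_atTop Real.tendsto_log_atTop
    have := hdiv.const_add 1
    rw [add_zero] at this
    refine this.congr' ?_
    filter_upwards [eventually_ge_atTop (2:ℝ)] with s hs
    have hlogpos : 0 < Real.log s := Real.log_pos (by linarith)
    field_simp
    ring
  -- part 3
  have hQ : Tendsto (fun s => y s / (g s) ^ 2) atTop (𝓝 (θ₀ / 2)) := by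
    have hsg : Tendsto (fun s => s / g s) atTop (𝓝 1) := by
      have := hg_s.inv₀ one_ne_zero
      rw [inv_one] at this
      refine this.congr fun s => ?_
      rw [inv_div]
    have h1 : Tendsto (fun s => (y s / s ^ 2) * (s / g s) ^ 2) atTop (𝓝 (θ₀ / 2 * 1 ^ 2)) :=
      hy2.mul (hsg.pow 2)
    rw [one_pow, mul_one] at h1
    refine h1.congr' ?_
    filter_upwards [eventually_gt_atTop (0:ℝ)] with s hs
    have := hgpos s
    field_simp
  have hlogQ : Tendsto (fun s => Real.log (y s / (g s) ^ 2)) atTop (𝓝 (Real.log (θ₀ / 2))) :=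
    hQ.log (div_pos hθ₀pos two_pos).ne'
  have hpart3 : ∃ L : ℝ, Tendsto (fun s => z s - (1 / 2) * Real.log (y s)) atTop (𝓝 L) := by
    refine ⟨Real.log θ₀ - (1/2) * Real.log (θ₀ / 2), ?_⟩
    have h1 : Tendsto (fun s => Real.log θ₀ - (1/2) * Real.log (y s / (g s) ^ 2)) atTop
        (𝓝 (Real.log θ₀ - (1/2) * Real.log (θ₀ / 2))) :=
      tendsto_const_nhds.sub (hlogQ.const_mul _)
    refine h1.congr' ?_
    filter_upwards [hy_pos] with s hys
    rw [hzlog s, Real.log_div (ne_of_gt hys) (pow_ne_zero 2 (ne_of_gt (hgpos s))),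
      Real.log_pow]
    push_cast
    ring
  exact ⟨hpart1, hy_pos, hpart3⟩
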